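/- Suppose β ≥ λ₁²/4 where λ₁ is the largest-magnitude eigenvalue of the real n×n matrix A. Then every eigenvalue μ of the augmented matrix A_β = [[A, -βI],[I, 0]] satisfies |μ| = √β; in particular A_β has no eigenvalue of strictly dominant magnitude. -/

import Mathlib

open Matrix

theorem stmt19 (n : ℕ) (A : Matrix (Fin n) (Fin n) ℝ) (lam₁ β : ℝ)
    (h1 : (lam₁ : ℂ) ∈ spectrum ℂ (A.map (fun x => (x : ℂ))))
    (hreal : ∀ μ ∈ spectrum ℂ (A.map (fun x => (x : ℂ))),
      ∃ lam : ℝ, μ = (lam : ℂ) ∧ |lam| ≤ |lam₁|)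
    (hβ : lam₁ ^ 2 / 4 ≤ β) :
    let Aβ : Matrix (Fin n ⊕ Fin n) (Fin n ⊕ Fin n) ℂ :=
      Matrix.fromBlocks (A.map (fun x => (x : ℂ))) (-(β : ℂ) • 1) 1 0
    ∀ μ ∈ spectrum ℂ Aβ, ‖μ‖ = Real.sqrt β := by
  intro Aβ μ hμ
  set A' : Matrix (Fin n) (Fin n) ℂ := A.map (fun x => (x : ℂ)) with hA'
  have hβ0 : 0 ≤ β := le_trans (by positivity) hβ
  have hnu := spectrum.mem_iff.mp hμ
  -- Suffices: |μ|^2 = β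
  suffices hkey : ‖μ‖ ^ 2 = β by
    rw [← hkey, Real.sqrt_sq (norm_nonneg μ)]
  by_cases hμ0 : μ = 0
  · -- then Aβ is not a unit; show β = 0
    subst hμ0
    rw [map_zero, zero_sub] at hnu
    have hβz : β = 0 := by
      by_contra hβne
      apply hnu
      apply IsUnit.neg
      have hinv : Aβ * Matrix.fromBlocks 0 1 (-(β:ℂ)⁻¹ • 1) ((β:ℂ)⁻¹ • A') = 1 := by
        show Matrix.fromBlocks A' (-(β : ℂ) • 1) 1 0 *
          Matrix.fromBlocks 0 1 (-(β:ℂ)⁻¹ • 1) ((β:ℂ)⁻¹ • A') = 1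
        rw [Matrix.fromBlocks_multiply, ← Matrix.fromBlocks_one]
        have hb : ((β : ℂ)) ≠ 0 := by exact_mod_cast hβne
        simp only [Matrix.mul_smul, Matrix.smul_mul, Matrix.mul_one, Matrix.one_mul,
          Matrix.mul_zero, Matrix.zero_mul, Matrix.neg_mul, Matrix.mul_neg, neg_smul, smul_neg,
          neg_neg, add_zero, zero_add, smul_smul, inv_mul_cancel₀ hb, one_smul]
        congr 1 <;> simp
      exact (Matrix.isUnit_iff_isUnit_det _).mpr
        (IsUnit.of_mul_eq_one _ (by rw [← Matrix.det_mul, hinv, Matrix.det_one]))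
    simp [hβz]
  · -- main case
    have hdet0 : ((algebraMap ℂ _ μ : Matrix (Fin n ⊕ Fin n) (Fin n ⊕ Fin n) ℂ) - Aβ).det = 0 := by
      by_contra h
      exact hnu ((Matrix.isUnit_iff_isUnit_det _).mpr (isUnit_iff_ne_zero.mpr h))
    set c : ℂ := μ + β / μ with hc
    have hblock : (algebraMap ℂ _ μ : Matrix (Fin n ⊕ Fin n) (Fin n ⊕ Fin n) ℂ) - Aβ
        = Matrix.fromBlocks (μ • 1 - A') ((β : ℂ) • 1) (-1) (μ • 1) := by
      rw [Algebra.algebraMap_eq_smul_one]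
      show μ • (1 : Matrix (Fin n ⊕ Fin n) (Fin n ⊕ Fin n) ℂ) -
        Matrix.fromBlocks A' (-(β : ℂ) • 1) 1 0 = _
      rw [← Matrix.fromBlocks_one, Matrix.fromBlocks_smul, sub_eq_add_neg,
        Matrix.fromBlocks_neg, Matrix.fromBlocks_add]
      congr 1 <;> simp [sub_eq_add_neg]
    letI : Invertible (μ • (1 : Matrix (Fin n) (Fin n) ℂ)) :=
      ⟨μ⁻¹ • 1, by
        simp [Matrix.smul_mul, Matrix.mul_smul, smul_smul, inv_mul_cancel₀ hμ0,
          mul_inv_cancel₀ hμ0],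
        by
        simp [Matrix.smul_mul, Matrix.mul_smul, smul_smul, inv_mul_cancel₀ hμ0,
          mul_inv_cancel₀ hμ0]⟩
    rw [hblock, Matrix.det_fromBlocks₂₂] at hdet0
    have hinner : (μ • 1 - A') - ((β : ℂ) • 1) * (μ⁻¹ • 1) * (-1) = c • 1 - A' := by
      rw [hc, add_smul, div_eq_mul_inv]
      simp only [Matrix.smul_mul, Matrix.one_mul, Matrix.mul_neg, Matrix.mul_one,
        smul_smul, sub_neg_eq_add, smul_neg]
      abel
    have hdetsc : (μ • (1 : Matrix (Fin n) (Fin n) ℂ)).det ≠ 0 := by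
      rw [Matrix.det_smul, Matrix.det_one, mul_one]
      exact pow_ne_zero _ hμ0
    have hcd : (c • (1 : Matrix (Fin n) (Fin n) ℂ) - A').det = 0 := by
      have := mul_eq_zero.mp hdet0
      rcases this with h | h
      · exact absurd h hdetsc
      · rw [← hinner]; exact h
    have hcspec : c ∈ spectrum ℂ A' := by
      rw [spectrum.mem_iff, Algebra.algebraMap_eq_smul_one]
      rw [Matrix.isUnit_iff_isUnit_det]
      rw [hcd]
      exact fun h => (isUnit_iff_ne_zero.mp h) rfl
    obtain ⟨lam, hceq, hlam⟩ := hreal c hcspec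
    -- μ^2 - lam * μ + β = 0
    have hquad : μ ^ 2 - (lam : ℂ) * μ + (β : ℂ) = 0 := by
      have : (μ + (β : ℂ) / μ) * μ = (lam : ℂ) * μ := by rw [← hceq, hc]
      field_simp at this
      linear_combination this
    have hdisc : lam ^ 2 ≤ 4 * β := by
      have h2 : lam ^ 2 ≤ lam₁ ^ 2 := by
        rw [← sq_abs lam, ← sq_abs lam₁]
        exact pow_le_pow_left₀ (abs_nonneg _) hlam 2
      linarith
    set x := μ.re with hx
    set y := μ.im with hy
    have hre : x ^ 2 - y ^ 2 - lam * x + β = 0 := by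
      have := congrArg Complex.re hquad
      simp [pow_two, Complex.mul_re, Complex.mul_im] at this
      ring_nf at this ⊢
      linarith
    have him : y * (2 * x - lam) = 0 := by
      have := congrArg Complex.im hquad
      simp [pow_two, Complex.mul_re, Complex.mul_im] at this
      ring_nf at this ⊢
      linarith
    have habs : ‖μ‖ ^ 2 = x ^ 2 + y ^ 2 := by
      rw [Complex.sq_norm, Complex.normSq_apply]; ring
    rw [habs]
    rcases mul_eq_zero.mp him with hy0 | hxl
    · have h2x : 2 * x = lam := by nlinarith [sq_nonneg (2 * x - lam)]
      linear_combination -hre + x * h2x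
    · have h2x : 2 * x = lam := by linarith
      linear_combination -hre + x * h2x
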